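/- Let M be a 3-connected matroid that is not a wheel or a whirl, and let F = (e_1, …, e_k) be a maximal fan of M with k ≥ 4. Then for all i ∈ [k−1]: any triangle containing {e_i, e_{i+1}} equals {e_{i−1}, e_i, e_{i+1}} or {e_i, e_{i+1}, e_{i+2}}, and any triad containing {e_i, e_{i+1}} equals {e_{i−1}, e_i, e_{i+1}} or {e_i, e_{i+1}, e_{i+2}}. -/

import Mathlib

open Matroid Set

namespace DetPairs

variable {α : Type*}

/-- The rank of a set in a matroid: the maximum size of an independent subset
(as an integer, for convenient arithmetic). -/
noncomputable def r (M : Matroid α) (X : Set α) : ℤ :=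
  ((sSup (Set.ncard '' {I | M.Indep I ∧ I ⊆ X}) : ℕ) : ℤ)

/-- The connectivity function `λ_M(X) = r(X) + r(E − X) − r(M)`. -/
noncomputable def lam (M : Matroid α) (X : Set α) : ℤ :=
  r M X + r M (M.E \ X) - r M M.E

/-- Local connectivity `⊓(X,Y) = r(X) + r(Y) − r(X ∪ Y)`. -/
noncomputable def localConn (M : Matroid α) (X Y : Set α) : ℤ :=
  r M X + r M Y - r M (X ∪ Y)

/-- A circuit: a minimal dependent set. -/
def Circuit (M : Matroid α) (C : Set α) : Prop :=
  C ⊆ M.E ∧ ¬ M.Indep C ∧ ∀ D, D ⊂ C → M.Indep D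

/-- A cocircuit: a circuit of the dual. -/
def Cocircuit (M : Matroid α) (C : Set α) : Prop := Circuit M✶ C

/-- A triangle: a 3-element circuit. -/
def Triangle (M : Matroid α) (T : Set α) : Prop := Circuit M T ∧ T.ncard = 3

/-- A triad: a 3-element cocircuit. -/
def Triad (M : Matroid α) (T : Set α) : Prop := Cocircuit M T ∧ T.ncard = 3

/-- A quad: a 4-element set that is both a circuit and a cocircuit. -/
def Quad (M : Matroid α) (Q : Set α) : Prop :=
  Circuit M Q ∧ Cocircuit M Q ∧ Q.ncard = 4

/-- Deletion of a set of elements. -/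
def Del (M : Matroid α) (D : Set α) : Matroid α := M ↾ (M.E \ D)

/-- Contraction of a set of elements. -/
def Con (M : Matroid α) (C : Set α) : Matroid α := (M✶ ↾ (M.E \ C))✶

/-- `M` is 3-connected: it has no `k`-separation for `k = 1, 2`, where a
`k`-separation is a set `X` with `λ(X) = k − 1`, `|X| ≥ k` and `|E − X| ≥ k`. -/
def ThreeConnected (M : Matroid α) : Prop :=
  ∀ k : ℕ, 0 < k → k < 3 → ∀ X ⊆ M.E,
    ¬ (lam M X = (k : ℤ) - 1 ∧ (k : ℤ) ≤ X.ncard ∧ (k : ℤ) ≤ (M.E \ X).ncard)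

/-- A detachable pair: distinct elements `e, f` such that `M \ e \ f` or
`M / e / f` is 3-connected. -/
def DetachablePair (M : Matroid α) (e f : α) : Prop :=
  e ≠ f ∧ e ∈ M.E ∧ f ∈ M.E ∧
    (ThreeConnected (Del M {e, f}) ∨ ThreeConnected (Con M {e, f}))

/-- The triple of elements with indices `i, i+1, i+2` in an ordering. -/
def tri (e : ℕ → α) (i : ℕ) : Set α := {e i, e (i + 1), e (i + 2)}

/-- `(e 0, …, e (n-1))` is a fan ordering of length `n ≥ 3` in `M`:
consecutive triples alternate between triangles and triads. -/
def FanOrd (M : Matroid α) (n : ℕ) (e : ℕ → α) : Prop :=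
  3 ≤ n ∧ Set.InjOn e (Set.Iio n) ∧ (∀ i < n, e i ∈ M.E) ∧
    (Triangle M (tri e 0) ∨ Triad M (tri e 0)) ∧
    ∀ i, i + 3 < n →
      (Triangle M (tri e i) → Triad M (tri e (i + 1))) ∧
      (Triad M (tri e i) → Triangle M (tri e (i + 1)))

/-- A fan (as a set): either a 2-element subset of the ground set, or the
underlying set of a fan ordering of length at least 3. -/
def IsFan (M : Matroid α) (F : Set α) : Prop :=
  (F ⊆ M.E ∧ F.ncard = 2) ∨ ∃ n e, FanOrd M n e ∧ F = e '' Set.Iio n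

/-- A maximal fan: a fan contained in no strictly larger fan. -/
def MaximalFan (M : Matroid α) (F : Set α) : Prop :=
  IsFan M F ∧ ∀ F', IsFan M F' → F ⊆ F' → F' = F

/-- `M` is a wheel or a whirl: its ground set has a cyclic ordering of even size
`2n` in which consecutive triples alternate between triangles and triads. -/
def IsWheelOrWhirl (M : Matroid α) : Prop :=
  ∃ (n : ℕ) (e : ℕ → α), 2 ≤ n ∧ Set.InjOn e (Set.Iio (2 * n)) ∧
    M.E = e '' Set.Iio (2 * n) ∧
    ∀ i < 2 * n,
      (i % 2 = 0 → Triangle M {e i, e ((i + 1) % (2 * n)), e ((i + 2) % (2 * n))}) ∧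
      (i % 2 = 1 → Triad M {e i, e ((i + 1) % (2 * n)), e ((i + 2) % (2 * n))})

/-- An `M(K₄)`-separator: a 6-element set `{a,b,c,x,y,z}` where `{x,y,z}` is a
triad and `{a,b,c}`, `{a,x,y}`, `{b,x,z}`, `{c,y,z}` are triangles. -/
def MK4Sep (M : Matroid α) (S : Set α) : Prop :=
  ∃ a b c x y z : α, S = {a, b, c, x, y, z} ∧ S.ncard = 6 ∧
    Triad M {x, y, z} ∧ Triangle M {a, b, c} ∧ Triangle M {a, x, y} ∧
    Triangle M {b, x, z} ∧ Triangle M {c, y, z}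

/-- A vertical 3-separation `(X, {e}, Y)` of `M`. -/
def VertThreeSep (M : Matroid α) (X : Set α) (e : α) (Y : Set α) : Prop :=
  X ∪ {e} ∪ Y = M.E ∧ Disjoint X Y ∧ e ∉ X ∧ e ∉ Y ∧
    lam M X = 2 ∧ lam M Y = 2 ∧ e ∈ M.closure X ∧ e ∈ M.closure Y ∧
    3 ≤ r M X ∧ 3 ≤ r M Y

/-- `N` is a simplification of `M`: a restriction of `M` to a set of
representatives, one from each parallel class of nonloops. -/
def SimplificationOf (M N : Matroid α) : Prop :=
  ∃ X : Set α, (∀ x ∈ X, x ∈ M.E ∧ x ∉ M.closure ∅) ∧ N = M ↾ X ∧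
    ∀ y ∈ M.E, y ∉ M.closure ∅ →
      ∃! x, x ∈ X ∧ M.closure {y} = M.closure {x}


variable {M : Matroid α} {X Y I J K B C D T S F : Set α} {a b c x y z : α} {n : ℕ} {e : ℕ → α}

/-- natural-number version of the rank -/
noncomputable def nr (M : Matroid α) (X : Set α) : ℕ :=
  sSup (Set.ncard '' {I | M.Indep I ∧ I ⊆ X})

lemma r_eq_nr (M : Matroid α) (X : Set α) : r M X = (nr M X : ℤ) := rfl

variable {M : Matroid α} {X Y I J K C D T S F : Set α} {a b c x y z : α}

lemma bddAbove_aux [M.Finite] (X : Set α) :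
    BddAbove (Set.ncard '' {I | M.Indep I ∧ I ⊆ X}) := by
  refine ⟨M.E.ncard, ?_⟩
  rintro n ⟨I, ⟨hI, -⟩, rfl⟩
  exact Set.ncard_le_ncard hI.subset_ground M.ground_finite

lemma nonempty_aux (M : Matroid α) (X : Set α) :
    (Set.ncard '' {I | M.Indep I ∧ I ⊆ X}).Nonempty :=
  ⟨0, ∅, ⟨M.empty_indep, empty_subset _⟩, by simp⟩

lemma le_nr [M.Finite] (hI : M.Indep I) (hIX : I ⊆ X) : I.ncard ≤ nr M X :=
  le_csSup (bddAbove_aux X) ⟨I, ⟨hI, hIX⟩, rfl⟩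

lemma nr_le_iff [M.Finite] {m : ℕ} :
    nr M X ≤ m ↔ ∀ I, M.Indep I → I ⊆ X → I.ncard ≤ m := by
  constructor
  · intro h I hI hIX
    exact le_trans (le_nr hI hIX) h
  · intro h
    exact csSup_le (nonempty_aux M X) (by rintro n ⟨I, ⟨hI, hIX⟩, rfl⟩; exact h I hI hIX)

lemma nr_eq_of [M.Finite] (hK : M.Indep K) (hKX : K ⊆ X)
    (h : ∀ J, M.Indep J → J ⊆ X → J.ncard ≤ K.ncard) : nr M X = K.ncard :=
  le_antisymm (nr_le_iff.2 h) (le_nr hK hKX)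

lemma nr_eq_basis' [M.Finite] (hI : M.IsBasis' I X) : nr M X = I.ncard := by
  refine nr_eq_of hI.indep hI.subset (fun J hJ hJX => ?_)
  obtain ⟨J', hJ', hJJ'⟩ := hJ.subset_isBasis'_of_subset hJX
  have h1 : J'.encard = I.encard := hJ'.encard_eq_encard hI
  have h2 : J'.ncard = I.ncard := by rw [Set.ncard_def, h1, ← Set.ncard_def]
  exact le_trans (Set.ncard_le_ncard hJJ' (M.set_finite J' hJ'.indep.subset_ground)) h2.le

lemma nr_eq_basis [M.Finite] (hI : M.IsBasis I X) : nr M X = I.ncard :=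
  nr_eq_basis' hI.isBasis'

lemma nr_indep [M.Finite] (hI : M.Indep I) : nr M I = I.ncard :=
  nr_eq_basis hI.isBasis_self

lemma nr_mono [M.Finite] (h : X ⊆ Y) : nr M X ≤ nr M Y :=
  nr_le_iff.2 fun I hI hIX => le_nr hI (hIX.trans h)

lemma nr_le_ncard' [M.Finite] (hX : X.Finite) : nr M X ≤ X.ncard :=
  nr_le_iff.2 fun _ hI hIX => Set.ncard_le_ncard hIX hX

@[simp] lemma nr_empty' (M : Matroid α) [M.Finite] : nr M ∅ = 0 := by
  simpa using nr_indep M.empty_indep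

lemma indep_of_nr_eq [M.Finite] (hX : X ⊆ M.E) (h : nr M X = X.ncard) : M.Indep X := by
  obtain ⟨I, hI⟩ := M.exists_isBasis' X
  have hIX : I = X := by
    refine Set.eq_of_subset_of_ncard_le hI.subset ?_ (M.set_finite X hX)
    rw [← nr_eq_basis' hI, h]
  rw [← hIX]; exact hI.indep

lemma base_ncard [M.Finite] (hB : M.IsBase B) : B.ncard = nr M M.E := by
  rw [nr_eq_basis hB.isBasis_ground]

/-- every independent subset of `cl Y` has size at most `nr Y` -/
lemma nr_le_of_subset_closure [M.Finite] (h : X ⊆ M.closure Y) : nr M X ≤ nr M Y := by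
  obtain ⟨J, hJ⟩ := M.exists_isBasis' Y
  rw [nr_eq_basis' hJ]
  refine nr_le_iff.2 fun K hK hKX => ?_
  have hKcl : K ⊆ M.closure J := by
    rw [hJ.closure_eq_closure]; exact hKX.trans h
  obtain ⟨K', hK', hKK'⟩ := hK.subset_isBasis_of_subset hKcl (M.closure_subset_ground J)
  have h1 : K'.encard = J.encard := hK'.encard_eq_encard hJ.indep.isBasis_closure
  have h2 : K'.ncard = J.ncard := by rw [Set.ncard_def, h1, ← Set.ncard_def]
  exact le_trans (Set.ncard_le_ncard hKK' (M.set_finite K' hK'.indep.subset_ground)) h2.le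

lemma nr_union_le [M.Finite] : nr M (X ∪ Y) ≤ nr M X + nr M Y := by
  refine nr_le_iff.2 fun I hI hIXY => ?_
  have h1 : I = (I ∩ X) ∪ (I \ X) := by simp [Set.inter_union_diff]
  have h2 : I.ncard ≤ (I ∩ X).ncard + (I \ X).ncard := by
    nth_rewrite 1 [h1]
    exact Set.ncard_union_le _ _
  have h3 : (I ∩ X).ncard ≤ nr M X := le_nr (hI.inter_right X) inter_subset_right
  have h4 : (I \ X).ncard ≤ nr M Y := le_nr (hI.diff X) (fun u hu => (hIXY hu.1).resolve_left hu.2)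
  omega

lemma nr_ground_le_add [M.Finite] (hX : X ⊆ M.E) : nr M M.E ≤ nr M X + nr M (M.E \ X) := by
  have := nr_union_le (M := M) (X := X) (Y := M.E \ X)
  rwa [Set.union_diff_cancel hX] at this

lemma lam_nonneg' [M.Finite] (hX : X ⊆ M.E) : 0 ≤ lam M X := by
  have := nr_ground_le_add hX
  simp only [lam, r_eq_nr]
  omega

-- Circuit basics

lemma Circuit_nonempty (hC : Circuit M C) : C.Nonempty := by
  rcases Set.eq_empty_or_nonempty C with h | h
  · exact absurd (h ▸ M.empty_indep) hC.2.1
  · exact h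

lemma circuit_finite [M.Finite] (hC : Circuit M C) : C.Finite := M.set_finite C hC.1

lemma circuit_diff_indep (hC : Circuit M C) (hx : x ∈ C) : M.Indep (C \ {x}) :=
  hC.2.2 _ (Set.diff_singleton_ssubset.2 hx)

lemma circuit_mem_closure_diff (hC : Circuit M C) (hx : x ∈ C) :
    x ∈ M.closure (C \ {x}) := by
  have hI := circuit_diff_indep hC hx
  by_contra h
  have : M.Indep (insert x (C \ {x})) := by
    rw [hI.insert_indep_iff_of_notMem (by simp)]
    exact ⟨hC.1 hx, h⟩
  rw [Set.insert_diff_singleton, Set.insert_eq_of_mem hx] at this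
  exact hC.2.1 this

lemma circuit_subset_closure_diff (hC : Circuit M C) (hx : x ∈ C) :
    C ⊆ M.closure (C \ {x}) := by
  intro y hy
  rcases eq_or_ne y x with rfl | hne
  · exact circuit_mem_closure_diff hC hx
  · exact M.subset_closure (C \ {x}) ((circuit_diff_indep hC hx).subset_ground) ⟨hy, hne⟩

lemma exists_circuit_of_dep [M.Finite] (hX : X ⊆ M.E) (hdep : ¬ M.Indep X) :
    ∃ C, Circuit M C ∧ C ⊆ X := by
  obtain ⟨n, hn⟩ : ∃ n, X.ncard = n := ⟨_, rfl⟩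
  induction n using Nat.strong_induction_on generalizing X with
  | _ n ih =>
    by_cases h : ∀ D, D ⊂ X → M.Indep D
    · exact ⟨X, ⟨hX, hdep, h⟩, subset_rfl⟩
    · push_neg at h
      obtain ⟨D, hDX, hD⟩ := h
      have hfin : X.Finite := M.set_finite X hX
      have hlt : D.ncard < n := hn ▸ Set.ncard_lt_ncard hDX hfin
      obtain ⟨C, hC, hCD⟩ := ih _ hlt (hDX.subset.trans hX) hD rfl
      exact ⟨C, hC, hCD.trans hDX.subset⟩

/-- circuit elimination -/
lemma circuit_elim [M.Finite] (hC : Circuit M C) (hD : Circuit M D) (hne : C ≠ D)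
    (hx : x ∈ C ∩ D) : ∃ C', Circuit M C' ∧ C' ⊆ (C ∪ D) \ {x} := by
  have hCE : C ⊆ M.E := hC.1
  have hDE : D ⊆ M.E := hD.1
  have hUfin : (C ∪ D).Finite := M.set_finite _ (Set.union_subset hCE hDE)
  refine exists_circuit_of_dep (Set.diff_subset.trans (Set.union_subset hCE hDE)) ?_
  intro hind
  -- y ∈ C \ D
  have hCD : ¬ C ⊆ D := by
    intro h
    rcases h.eq_or_ssubset with h' | h'
    · exact hne h'
    · exact hC.2.1 (hD.2.2 _ h')
  obtain ⟨y, hyC, hyD⟩ := Set.not_subset.1 hCD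
  have hyx : y ≠ x := fun h => hyD (h ▸ hx.2)
  -- (C ∪ D) ⊆ closure ((C ∪ D) \ {y})
  have hsub : C ∪ D ⊆ M.closure ((C ∪ D) \ {y}) := by
    intro u hu
    rcases eq_or_ne u y with rfl | hne'
    · exact M.closure_subset_closure (Set.diff_subset_diff_left Set.subset_union_left)
        (circuit_mem_closure_diff hC hyC)
    · exact M.subset_closure _ (Set.diff_subset.trans (Set.union_subset hCE hDE)) ⟨hu, hne'⟩
  have h1 : nr M (C ∪ D) ≤ nr M ((C ∪ D) \ {y}) := nr_le_of_subset_closure hsub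
  have h2 : nr M ((C ∪ D) \ {y}) ≤ ((C ∪ D) \ {y}).ncard := nr_le_ncard' (hUfin.subset Set.diff_subset)
  have h3 : ((C ∪ D) \ {x}).ncard ≤ nr M (C ∪ D) := le_nr hind Set.diff_subset
  have hy' : ((C ∪ D) \ {y}).ncard = (C ∪ D).ncard - 1 := by
    rw [← Set.ncard_diff_singleton_add_one (Set.mem_union_left _ hyC) hUfin]; omega
  have hx' : ((C ∪ D) \ {x}).ncard = (C ∪ D).ncard - 1 := by
    rw [← Set.ncard_diff_singleton_add_one (Set.mem_union_left _ hx.1) hUfin]; omega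
  -- so nr ((C∪D)\{y}) = its ncard, hence independent, contradiction with D ⊆ it
  have hind' : M.Indep ((C ∪ D) \ {y}) := by
    refine indep_of_nr_eq (Set.diff_subset.trans (Set.union_subset hCE hDE)) ?_
    omega
  exact hD.2.1 (hind'.subset (fun u hu => ⟨Set.mem_union_right _ hu, fun h => hyD ((h : u = y) ▸ hu)⟩))

-- spanning-type lemmas

lemma exists_base_subset_of_nr [M.Finite] (hX : X ⊆ M.E) (h : nr M M.E ≤ nr M X) :
    ∃ B, M.IsBase B ∧ B ⊆ X := by
  obtain ⟨I, hI⟩ := M.exists_isBasis' X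
  obtain ⟨B, hB, hIB⟩ := hI.indep.exists_isBase_superset
  have hle : B.ncard ≤ I.ncard := by rw [base_ncard hB, ← nr_eq_basis' hI]; exact h
  have : I = B := Set.eq_of_subset_of_ncard_le hIB hle (M.set_finite B hB.subset_ground)
  exact ⟨B, hB, this ▸ hI.subset⟩

/-- Orthogonality: a circuit and cocircuit cannot meet in exactly one element. -/
lemma orth [M.Finite] (hC : Circuit M C) (hD : Cocircuit M D) (h : C ∩ D = {x}) : False := by
  have hxC : x ∈ C := (h ▸ (Set.mem_singleton x) : x ∈ C ∩ D).1
  have hxD : x ∈ D := (h ▸ (Set.mem_singleton x) : x ∈ C ∩ D).2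
  set H := M.E \ D with hH
  have hDE : D ⊆ M.E := hD.1
  -- C \ {x} ⊆ H
  have hCH : C \ {x} ⊆ H := by
    intro u hu
    refine ⟨hC.1 hu.1, fun huD => hu.2 ?_⟩
    have : u ∈ C ∩ D := ⟨hu.1, huD⟩
    rwa [h] at this
  -- nr (H ∪ {x}) = nr H  would give base in H, contradiction with D co-dep
  have hxcl : x ∈ M.closure H :=
    M.closure_subset_closure hCH (circuit_mem_closure_diff hC hxC)
  have hins : insert x H ⊆ M.closure H := by
    rw [Set.insert_subset_iff]
    exact ⟨hxcl, M.subset_closure H Set.diff_subset⟩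
  have h1 : nr M (insert x H) ≤ nr M H := nr_le_of_subset_closure hins
  -- D \ {x} is coindependent: exists base B ⊆ E \ (D \ {x}) = H ∪ {x}
  have hcoind : M✶.Indep (D \ {x}) := hD.2.2 _ (Set.diff_singleton_ssubset.2 hxD)
  obtain ⟨-, B, hB, hdisj⟩ := (Matroid.dual_indep_iff_exists').1 hcoind
  have hBsub : B ⊆ insert x H := by
    intro u hu
    by_cases hux : u = x
    · exact hux ▸ Set.mem_insert x H
    · refine Set.mem_insert_of_mem _ ⟨hB.subset_ground hu, fun huD => ?_⟩
      exact hdisj.ne_of_mem ⟨huD, hux⟩ hu rfl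
  have h2 : nr M M.E ≤ nr M H := le_trans (by rw [← base_ncard hB]; exact le_nr hB.indep hBsub : nr M M.E ≤ nr M (insert x H)) h1
  obtain ⟨B', hB', hB'H⟩ := exists_base_subset_of_nr Set.diff_subset h2
  -- D is dual-dependent: meets every base
  have hdep : ¬ M✶.Indep D := hD.2.1
  rw [Matroid.dual_indep_iff_exists hDE] at hdep
  push_neg at hdep
  obtain ⟨u, huD, huB'⟩ := Set.not_disjoint_iff.1 (hdep B' hB')
  exact (hB'H huB').2 huD

/-- orthogonality, applied form -/
lemma orth' [M.Finite] (hC : Circuit M C) (hD : Cocircuit M D) (hx : x ∈ C) (hxD : x ∈ D)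
    (h : ∀ y, y ∈ C → y ∈ D → y = x) : False := by
  refine orth hC hD (x := x) ?_
  ext u
  exact ⟨fun hu => h u hu.1 hu.2, fun hu => hu ▸ ⟨hx, hxD⟩⟩

-- dual rank formula, in addition form
lemma nr_dual_add [M.Finite] (hX : X ⊆ M.E) :
    nr M✶ X + nr M M.E = X.ncard + nr M (M.E \ X) := by
  obtain ⟨I, hI⟩ := M.exists_isBasis (M.E \ X) Set.diff_subset
  obtain ⟨B, hB, hIB⟩ := hI.exists_isBase
  have hfinX : X.Finite := M.set_finite X hX
  have hfinB : B.Finite := M.set_finite B hB.subset_ground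
  -- J := X \ B is dual independent
  have hJind : M✶.Indep (X \ B) :=
    (Matroid.dual_indep_iff_exists').2 ⟨Set.diff_subset.trans hX, B, hB, Set.disjoint_sdiff_left⟩
  -- key cardinality: for any base B₀ avoiding dual-indep J', counting
  have hcount : ∀ B₀ : Set α, M.IsBase B₀ → (X \ B₀).ncard + nr M M.E ≤ X.ncard + nr M (M.E \ X) := by
    intro B₀ hB₀
    have hfinB₀ : B₀.Finite := M.set_finite B₀ hB₀.subset_ground
    have h1 : (X ∩ B₀).ncard + (X \ B₀).ncard = X.ncard := by
      rw [Set.ncard_inter_add_ncard_diff_eq_ncard X B₀ hfinX]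
    have h2 : (B₀ \ X).ncard + (B₀ ∩ X).ncard = B₀.ncard := by
      rw [add_comm, Set.ncard_inter_add_ncard_diff_eq_ncard B₀ X hfinB₀]
    have h3 : (B₀ \ X).ncard ≤ nr M (M.E \ X) :=
      le_nr (hB₀.indep.diff X) (Set.diff_subset_diff_left hB₀.subset_ground)
    have h4 : B₀.ncard = nr M M.E := base_ncard hB₀
    have h5 : (X ∩ B₀).ncard = (B₀ ∩ X).ncard := by rw [Set.inter_comm]
    omega
  -- equality for our special B
  have hIeq : B \ X = I := by
    rw [hIB]
    ext u
    constructor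
    · rintro ⟨huB, huX⟩
      exact ⟨huB, hB.subset_ground huB, huX⟩
    · rintro ⟨huB, -, huX⟩
      exact ⟨huB, huX⟩
  have heq : (X \ B).ncard + nr M M.E = X.ncard + nr M (M.E \ X) := by
    have h1 : (X ∩ B).ncard + (X \ B).ncard = X.ncard := by
      rw [Set.ncard_inter_add_ncard_diff_eq_ncard X B hfinX]
    have h2 : (B \ X).ncard + (B ∩ X).ncard = B.ncard := by
      rw [add_comm, Set.ncard_inter_add_ncard_diff_eq_ncard B X hfinB]
    have h3 : (B \ X).ncard = nr M (M.E \ X) := by rw [hIeq, ← nr_eq_basis' hI.isBasis']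
    have h4 : B.ncard = nr M M.E := base_ncard hB
    have h5 : (X ∩ B).ncard = (B ∩ X).ncard := by rw [Set.inter_comm]
    omega
  -- nr M✶ X = (X \ B).ncard
  have : nr M✶ X = (X \ B).ncard := by
    refine le_antisymm ?_ (le_nr hJind Set.diff_subset)
    refine nr_le_iff.2 fun J' hJ' hJ'X => ?_
    obtain ⟨-, B₀, hB₀, hdisj⟩ := (Matroid.dual_indep_iff_exists').1 hJ'
    have hsub : J' ⊆ X \ B₀ := fun u hu => ⟨hJ'X hu, fun huB => hdisj.ne_of_mem hu huB rfl⟩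
    have := hcount B₀ hB₀
    have hle : J'.ncard ≤ (X \ B₀).ncard := Set.ncard_le_ncard hsub (hfinX.subset Set.diff_subset)
    omega
  omega

lemma lam_eq (M : Matroid α) (X : Set α) :
    lam M X = (nr M X : ℤ) + (nr M (M.E \ X) : ℤ) - (nr M M.E : ℤ) := rfl

lemma ncard_add_ncard_diff [M.Finite] (hX : X ⊆ M.E) :
    (M.E \ X).ncard + X.ncard = M.E.ncard :=
  Set.ncard_diff_add_ncard_of_subset hX M.ground_finite

lemma lam_dual [M.Finite] (hX : X ⊆ M.E) : lam M✶ X = lam M X := by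
  have h1 := nr_dual_add hX
  have h2 := nr_dual_add (X := M.E \ X) (Set.diff_subset)
  have h3 := nr_dual_add (X := M.E) (subset_rfl)
  rw [Set.diff_diff_cancel_left hX] at h2
  rw [Set.diff_self] at h3
  rw [nr_empty'] at h3
  have h4 := ncard_add_ncard_diff hX
  have hE : M✶.E = M.E := rfl
  rw [lam_eq, lam_eq, hE]
  omega

lemma threeConnected_dual [M.Finite] (hM : ThreeConnected M) : ThreeConnected M✶ := by
  intro k hk hk3 X hX
  have hE : M✶.E = M.E := rfl
  rw [hE] at hX
  rw [show M✶.E \ X = M.E \ X from rfl, lam_dual hX]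
  exact hM k hk hk3 X hX

lemma nr_circuit [M.Finite] (hC : Circuit M C) : nr M C + 1 = C.ncard := by
  obtain ⟨x, hx⟩ := Circuit_nonempty hC
  have hfin : C.Finite := M.set_finite C hC.1
  have h1 : nr M C ≤ C.ncard := nr_le_ncard' hfin
  have h2 : nr M C ≠ C.ncard := fun h => hC.2.1 (indep_of_nr_eq hC.1 h)
  have h3 : (C \ {x}).ncard ≤ nr M C := le_nr (circuit_diff_indep hC hx) Set.diff_subset
  have h4 : (C \ {x}).ncard + 1 = C.ncard := Set.ncard_diff_singleton_add_one hx hfin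
  omega

lemma circuit_card [M.Finite] (h3 : ThreeConnected M) (hE : 4 ≤ M.E.ncard)
    (hC : Circuit M C) : 3 ≤ C.ncard := by
  have hfin : C.Finite := M.set_finite C hC.1
  have hr := nr_circuit hC
  have hmono : nr M (M.E \ C) ≤ nr M M.E := nr_mono Set.diff_subset
  have hcard := ncard_add_ncard_diff hC.1
  have hpos : 1 ≤ C.ncard := Set.ncard_pos hfin |>.2 (Circuit_nonempty hC)
  by_contra hlt
  push_neg at hlt
  interval_cases h : C.ncard
  · -- ncard = 1
    have hlam : lam M C = 0 := by
      have hge := lam_nonneg' (M := M) hC.1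
      rw [lam_eq] at hge ⊢
      omega
    exact h3 1 one_pos (by norm_num) C hC.1 ⟨by rw [hlam]; norm_num, by omega, by omega⟩
  · -- ncard = 2
    have hge := lam_nonneg' (M := M) hC.1
    have hle : lam M C ≤ 1 := by rw [lam_eq]; omega
    rcases (by omega : lam M C = 0 ∨ lam M C = 1) with h0 | h1
    · exact h3 1 one_pos (by norm_num) C hC.1 ⟨by rw [h0]; norm_num, by omega, by omega⟩
    · exact h3 2 two_pos (by norm_num) C hC.1 ⟨by rw [h1]; norm_num, by omega, by omega⟩

lemma cocircuit_card [M.Finite] (h3 : ThreeConnected M) (hE : 4 ≤ M.E.ncard)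
    (hC : Cocircuit M C) : 3 ≤ C.ncard :=
  circuit_card (threeConnected_dual h3) (by rw [show M✶.E = M.E from rfl]; exact hE) hC

lemma small_indep [M.Finite] (h3 : ThreeConnected M) (hE : 4 ≤ M.E.ncard)
    (hS : S ⊆ M.E) (hcard : S.ncard ≤ 2) : M.Indep S := by
  by_contra hdep
  obtain ⟨C, hC, hCS⟩ := exists_circuit_of_dep hS hdep
  have := circuit_card h3 hE hC
  have : C.ncard ≤ S.ncard := Set.ncard_le_ncard hCS (M.set_finite S hS)
  omega

lemma nr_ground_ge_two [M.Finite] (h3 : ThreeConnected M) (hE : 4 ≤ M.E.ncard)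
    (ha : a ∈ M.E) (hb : b ∈ M.E) (hab : a ≠ b) : 2 ≤ nr M M.E := by
  have hind : M.Indep {a, b} := small_indep h3 hE (by
    rw [Set.insert_subset_iff, Set.singleton_subset_iff]; exact ⟨ha, hb⟩) (by
    rw [Set.ncard_pair hab])
  have := le_nr hind (hind.subset_ground)
  rwa [Set.ncard_pair hab] at this

/-- every 3-subset of the ground set of a rank-2 matroid (with the standing hypotheses)
is a circuit -/
lemma u24_triple [M.Finite] (h3 : ThreeConnected M) (hE : 4 ≤ M.E.ncard)
    (hnrE : nr M M.E = 2) (hS : S ⊆ M.E) (hcard : S.ncard = 3) : Circuit M S := by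
  refine ⟨hS, fun hind => ?_, fun D hD => ?_⟩
  · have := le_nr hind hS
    have := le_nr hind (hind.subset_ground)
    omega
  · refine small_indep h3 hE (hD.subset.trans hS) ?_
    have hfin : S.Finite := M.set_finite S hS
    have := Set.ncard_lt_ncard hD hfin
    omega

/-- In a 3-connected matroid with a set that is both a 3-circuit and 3-cocircuit,
the matroid is `U_{2,4}`, hence a whirl. -/
lemma tt_lemma [M.Finite] (h3 : ThreeConnected M) (hC : Circuit M S) (hD : Cocircuit M S)
    (hcard : S.ncard = 3) : IsWheelOrWhirl M := by
  have hSE : S ⊆ M.E := hC.1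
  have hr : nr M S + 1 = 3 := by rw [nr_circuit hC, hcard]
  have hr' : nr M✶ S + 1 = 3 := by
    rw [nr_circuit (M := M✶) hD, hcard]
  have hdualS := nr_dual_add hSE
  have hlam : lam M S = 1 := by rw [lam_eq]; omega
  have hEcard := ncard_add_ncard_diff hSE
  have hnot := h3 2 two_pos (by norm_num) S hSE
  have hles : (M.E \ S).ncard ≤ 1 := by
    by_contra hgt
    push_neg at hgt
    exact hnot ⟨by rw [hlam]; norm_num, by omega, by omega⟩
  have hdualE := nr_dual_add (X := M.E) subset_rfl
  rw [Set.diff_self, nr_empty'] at hdualE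
  rcases Nat.lt_or_ge (M.E \ S).ncard 1 with h0 | h1
  · exfalso
    have hES : M.E = S := by
      have hemp : M.E \ S = ∅ := by
        rw [← Set.ncard_eq_zero (M.ground_finite.diff (t := S))]
        omega
      have hsub : M.E ⊆ S := by
        intro u hu
        by_contra hus
        exact (Set.eq_empty_iff_forall_notMem.1 hemp) u ⟨hu, hus⟩
      exact hsub.antisymm hSE
    rw [hES] at hdualE
    omega
  -- |E \ S| = 1, |E| = 4
  have hg1 : (M.E \ S).ncard = 1 := le_antisymm hles h1
  have hE4 : M.E.ncard = 4 := by omega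
  have hE4' : 4 ≤ M.E.ncard := hE4.ge
  obtain ⟨a, b, c, hab, hac, hbc, hSeq⟩ := Set.ncard_eq_three.1 hcard
  have haS : a ∈ S := by rw [hSeq]; simp
  have hbS : b ∈ S := by rw [hSeq]; simp
  have hcS : c ∈ S := by rw [hSeq]; simp
  have hdiff1 : nr M (M.E \ S) ≤ 1 := le_trans (nr_le_ncard' (M.ground_finite.diff (t := S))) hg1.le
  have hnrE : nr M M.E = 2 := by
    have h2 := nr_ground_ge_two h3 hE4' (hSE haS) (hSE hbS) hab
    omega
  have hnrE' : nr M✶ M✶.E = 2 := by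
    show nr M✶ M.E = 2
    omega
  -- the extra element g
  obtain ⟨g, hgeq⟩ := Set.ncard_eq_one.1 hg1
  have hgE : g ∈ M.E := (hgeq ▸ (rfl : g ∈ ({g} : Set α)) : g ∈ M.E \ S).1
  have hgS : g ∉ S := (hgeq ▸ (rfl : g ∈ ({g} : Set α)) : g ∈ M.E \ S).2
  have hga : g ≠ a := fun h => hgS (h ▸ haS)
  have hgb : g ≠ b := fun h => hgS (h ▸ hbS)
  have hgc : g ≠ c := fun h => hgS (h ▸ hcS)
  have hEeq : M.E = insert g S := by
    ext u
    constructor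
    · intro hu
      by_cases huS : u ∈ S
      · exact Set.mem_insert_of_mem _ huS
      · have : u ∈ M.E \ S := ⟨hu, huS⟩
        rw [hgeq] at this
        exact this ▸ Set.mem_insert _ _
    · rintro (rfl | hu)
      · exact hgE
      · exact hSE hu
  -- enumeration
  let ef : ℕ → α := fun i => if i = 0 then a else if i = 1 then b else if i = 2 then c else g
  have hef0 : ef 0 = a := rfl
  have hef1 : ef 1 = b := rfl
  have hef2 : ef 2 = c := rfl
  have hef3 : ef 3 = g := rfl
  refine ⟨2, ef, le_rfl, ?_, ?_, ?_⟩
  · intro i hi j hj hij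
    simp only [Set.mem_Iio] at hi hj
    norm_num at hi hj
    interval_cases i <;> interval_cases j <;>
      simp only [hef0, hef1, hef2, hef3] at hij <;>
      first
        | rfl
        | exact absurd hij hab | exact absurd hij hac | exact absurd hij hbc
        | exact absurd hij hab.symm | exact absurd hij hac.symm | exact absurd hij hbc.symm
        | exact absurd hij hga | exact absurd hij hgb | exact absurd hij hgc
        | exact absurd hij hga.symm | exact absurd hij hgb.symm | exact absurd hij hgc.symm
  · ext u
    simp only [Set.mem_image, Set.mem_Iio]
    constructor
    · intro hu
      rw [hEeq] at hu
      rcases hu with rfl | hu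
      · exact ⟨3, by norm_num, hef3⟩
      · rw [hSeq] at hu
        rcases hu with rfl | rfl | rfl
        · exact ⟨0, by norm_num, hef0⟩
        · exact ⟨1, by norm_num, hef1⟩
        · exact ⟨2, by norm_num, hef2⟩
    · rintro ⟨i, hi, rfl⟩
      interval_cases i
      · exact hSE haS
      · exact hSE hbS
      · exact hSE hcS
      · exact hgE
  · -- triples
    have habc : Triangle M {a, b, c} := ⟨u24_triple h3 hE4' hnrE (hSeq ▸ hSE)
      (Set.ncard_eq_three.2 ⟨a, b, c, hab, hac, hbc, rfl⟩), Set.ncard_eq_three.2 ⟨a, b, c, hab, hac, hbc, rfl⟩⟩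
    have hcga : Triangle M {c, g, a} := by
      have hsub : ({c, g, a} : Set α) ⊆ M.E := by
        intro u hu; rcases hu with rfl | rfl | rfl
        · exact hSE hcS
        · exact hgE
        · exact hSE haS
      have h3' : ({c, g, a} : Set α).ncard = 3 :=
        Set.ncard_eq_three.2 ⟨c, g, a, hgc.symm, hac.symm, hga, rfl⟩
      exact ⟨u24_triple h3 hE4' hnrE hsub h3', h3'⟩
    have h3d := threeConnected_dual h3
    have hE4d : 4 ≤ M✶.E.ncard := hE4'
    have hbcg : Triad M {b, c, g} := by
      have hsub : ({b, c, g} : Set α) ⊆ M✶.E := by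
        intro u hu; rcases hu with rfl | rfl | rfl
        · exact hSE hbS
        · exact hSE hcS
        · exact hgE
      have h3' : ({b, c, g} : Set α).ncard = 3 :=
        Set.ncard_eq_three.2 ⟨b, c, g, hbc, hgb.symm, hgc.symm, rfl⟩
      exact ⟨u24_triple h3d hE4d hnrE' hsub h3', h3'⟩
    have hgab : Triad M {g, a, b} := by
      have hsub : ({g, a, b} : Set α) ⊆ M✶.E := by
        intro u hu; rcases hu with rfl | rfl | rfl
        · exact hgE
        · exact hSE haS
        · exact hSE hbS
      have h3' : ({g, a, b} : Set α).ncard = 3 :=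
        Set.ncard_eq_three.2 ⟨g, a, b, hga, hgb, hab, rfl⟩
      exact ⟨u24_triple h3d hE4d hnrE' hsub h3', h3'⟩
    intro i hi
    have hi4 : i < 4 := by omega
    clear hi
    interval_cases i
    · refine ⟨fun _ => ?_, fun h => by omega⟩
      rw [show (0+1) % (2*2) = 1 by norm_num, show (0+2) % (2*2) = 2 by norm_num,
        hef0, hef1, hef2]
      exact habc
    · refine ⟨fun h => by omega, fun _ => ?_⟩
      rw [show (1+1) % (2*2) = 2 by norm_num, show (1+2) % (2*2) = 3 by norm_num,
        hef1, hef2, hef3]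
      exact hbcg
    · refine ⟨fun _ => ?_, fun h => by omega⟩
      rw [show (2+1) % (2*2) = 3 by norm_num, show (2+2) % (2*2) = 0 by norm_num,
        hef2, hef3, hef0]
      exact hcga
    · refine ⟨fun h => by omega, fun _ => ?_⟩
      rw [show (3+1) % (2*2) = 0 by norm_num, show (3+2) % (2*2) = 1 by norm_num,
        hef3, hef0, hef1]
      exact hgab

lemma not_both [M.Finite] (h3 : ThreeConnected M) (hW : ¬ IsWheelOrWhirl M)
    (h : Triangle M S) (h' : Triad M S) : False :=
  hW (tt_lemma h3 h.1 h'.1 h.2)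

lemma FanOrd.n3 (h : FanOrd M n e) : 3 ≤ n := h.1
lemma FanOrd.inj (h : FanOrd M n e) : Set.InjOn e (Set.Iio n) := h.2.1
lemma FanOrd.memE (h : FanOrd M n e) : ∀ i < n, e i ∈ M.E := h.2.2.1
lemma FanOrd.first (h : FanOrd M n e) : Triangle M (tri e 0) ∨ Triad M (tri e 0) := h.2.2.2.1
lemma FanOrd.alt (h : FanOrd M n e) : ∀ i, i + 3 < n →
    (Triangle M (tri e i) → Triad M (tri e (i + 1))) ∧
    (Triad M (tri e i) → Triangle M (tri e (i + 1))) := h.2.2.2.2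

lemma FanOrd.ne (h : FanOrd M n e) {i j : ℕ} (hi : i < n) (hj : j < n) (hij : i ≠ j) :
    e i ≠ e j := fun hh => hij (h.inj (by simpa using hi) (by simpa using hj) hh)

lemma FanOrd.typed (h : FanOrd M n e) : ∀ j, j + 2 < n →
    Triangle M (tri e j) ∨ Triad M (tri e j) := by
  intro j
  induction j with
  | zero => exact fun _ => h.first
  | succ k ih =>
    intro hlt
    rcases ih (by omega) with ht | ht
    · exact Or.inr ((h.alt k (by omega)).1 ht)
    · exact Or.inl ((h.alt k (by omega)).2 ht)

lemma FanOrd.parity (h : FanOrd M n e) (ht0 : Triangle M (tri e 0)) :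
    ∀ j, j + 2 < n → (j % 2 = 0 → Triangle M (tri e j)) ∧ (j % 2 = 1 → Triad M (tri e j)) := by
  intro j
  induction j with
  | zero => exact fun _ => ⟨fun _ => ht0, fun hh => by omega⟩
  | succ k ih =>
    intro hlt
    constructor
    · intro hpar
      exact (h.alt k (by omega)).2 ((ih (by omega)).2 (by omega))
    · intro hpar
      exact (h.alt k (by omega)).1 ((ih (by omega)).1 (by omega))

lemma FanOrd.parity' (h : FanOrd M n e) (ht0 : Triad M (tri e 0)) :
    ∀ j, j + 2 < n → (j % 2 = 0 → Triad M (tri e j)) ∧ (j % 2 = 1 → Triangle M (tri e j)) := by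
  intro j
  induction j with
  | zero => exact fun _ => ⟨fun _ => ht0, fun hh => by omega⟩
  | succ k ih =>
    intro hlt
    constructor
    · intro hpar
      exact (h.alt k (by omega)).1 ((ih (by omega)).2 (by omega))
    · intro hpar
      exact (h.alt k (by omega)).2 ((ih (by omega)).1 (by omega))

lemma tri_subset_ground (h : FanOrd M n e) {i : ℕ} (hi : i + 2 < n) : tri e i ⊆ M.E := by
  intro u hu
  simp only [tri, Set.mem_insert_iff, Set.mem_singleton_iff] at hu
  rcases hu with rfl | rfl | rfl
  exacts [h.memE _ (by omega), h.memE _ (by omega), h.memE _ (by omega)]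

lemma triple_rev (a b c : α) : ({a, b, c} : Set α) = {c, b, a} := by
  ext u
  simp only [Set.mem_insert_iff, Set.mem_singleton_iff]
  tauto

lemma tri_rev {i : ℕ} (hi : i + 2 < n) :
    tri (fun j => e (n - 1 - j)) i = tri e (n - 3 - i) := by
  simp only [tri]
  rw [show n - 1 - i = (n - 3 - i) + 2 by omega, show n - 1 - (i + 1) = (n - 3 - i) + 1 by omega,
    show n - 1 - (i + 2) = n - 3 - i by omega, triple_rev]

lemma FanOrd.rev [M.Finite] (h : FanOrd M n e) (h3c : ThreeConnected M)
    (hW : ¬ IsWheelOrWhirl M) : FanOrd M n (fun j => e (n - 1 - j)) := by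
  have hn := h.n3
  refine ⟨hn, ?_, ?_, ?_, ?_⟩
  · intro i hi j hj hij
    simp only [Set.mem_Iio] at hi hj
    have := h.inj (show n - 1 - i ∈ Set.Iio n by simp only [Set.mem_Iio]; omega)
      (show n - 1 - j ∈ Set.Iio n by simp only [Set.mem_Iio]; omega) hij
    omega
  · intro i hi
    exact h.memE _ (by omega)
  · rw [tri_rev (by omega)]
    rw [show n - 3 - 0 = n - 3 by omega]
    exact h.typed (n - 3) (by omega)
  · intro i hi
    have e1 : tri (fun j => e (n - 1 - j)) i = tri e (n - 3 - i) := tri_rev (by omega)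
    have e2 : tri (fun j => e (n - 1 - j)) (i + 1) = tri e (n - 4 - i) := by
      rw [tri_rev (by omega), show n - 3 - (i + 1) = n - 4 - i by omega]
    constructor
    · intro htri
      rw [e1] at htri
      rw [e2]
      rcases h.typed (n - 4 - i) (by omega) with ht | ht
      · exfalso
        have h5 := (h.alt (n - 4 - i) (by omega)).1 ht
        rw [show n - 4 - i + 1 = n - 3 - i by omega] at h5
        exact not_both h3c hW htri h5
      · exact ht
    · intro htria
      rw [e1] at htria
      rw [e2]
      rcases h.typed (n - 4 - i) (by omega) with ht | ht
      · exact ht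
      · exfalso
        have h5 := (h.alt (n - 4 - i) (by omega)).2 ht
        rw [show n - 4 - i + 1 = n - 3 - i by omega] at h5
        exact not_both h3c hW h5 htria

lemma rev_image : (fun j => e (n - 1 - j)) '' Set.Iio n = e '' Set.Iio n := by
  ext u
  simp only [Set.mem_image, Set.mem_Iio]
  constructor
  · rintro ⟨j, hj, rfl⟩
    exact ⟨n - 1 - j, by omega, rfl⟩
  · rintro ⟨i, hi, rfl⟩
    exact ⟨n - 1 - i, by omega, by rw [show n - 1 - (n - 1 - i) = i by omega]⟩

lemma ncard_Iio (n : ℕ) : (Set.Iio n).ncard = n := by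
  rw [← Finset.coe_range, Set.ncard_coe_finset, Finset.card_range]

lemma fan_ncard (h : Set.InjOn e (Set.Iio n)) : (e '' Set.Iio n).ncard = n := by
  rw [Set.ncard_image_of_injOn h, ncard_Iio]

lemma fan_subset_ground (h : FanOrd M n e) : e '' Set.Iio n ⊆ M.E := by
  rintro u ⟨i, hi, rfl⟩
  exact h.memE i hi

lemma ground_four (h : FanOrd M n e) [M.Finite] (hn : 4 ≤ n) : 4 ≤ M.E.ncard := by
  have h1 : (e '' Set.Iio n).ncard = n := fan_ncard h.inj
  have h2 : (e '' Set.Iio n).ncard ≤ M.E.ncard :=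
    Set.ncard_le_ncard (fan_subset_ground h) M.ground_finite
  omega

/-- extension of a fan on the left by a triangle -/
lemma fan_extend_left [M.Finite] (h3c : ThreeConnected M) (hW : ¬ IsWheelOrWhirl M)
    (h : FanOrd M n e) (hz : z ∈ M.E) (hzF : z ∉ e '' Set.Iio n)
    (hT : Triangle M {z, e 0, e 1}) (ht0 : Triad M (tri e 0)) :
    IsFan M (insert z (e '' Set.Iio n)) := by
  have hn3 := h.n3
  refine Or.inr ⟨n + 1, fun j => if j = 0 then z else e (j - 1), ?_, ?_⟩
  · refine ⟨by omega, ?_, ?_, ?_, ?_⟩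
    · intro i hi j hj hij
      simp only [Set.mem_Iio] at hi hj
      by_cases hi0 : i = 0 <;> by_cases hj0 : j = 0
      · omega
      · exfalso
        simp only [hi0, if_pos, if_neg hj0] at hij
        exact hzF ⟨j - 1, by simp only [Set.mem_Iio]; omega, hij.symm⟩
      · exfalso
        simp only [hj0, if_pos, if_neg hi0] at hij
        exact hzF ⟨i - 1, by simp only [Set.mem_Iio]; omega, hij⟩
      · simp only [if_neg hi0, if_neg hj0] at hij
        have := h.inj (show i - 1 ∈ Set.Iio n by simp only [Set.mem_Iio]; omega)
          (show j - 1 ∈ Set.Iio n by simp only [Set.mem_Iio]; omega) hij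
        omega
    · intro i hi
      by_cases hi0 : i = 0
      · simpa [hi0] using hz
      · simp only [if_neg hi0]
        exact h.memE _ (by omega)
    · left
      have : tri (fun j => if j = 0 then z else e (j - 1)) 0 = {z, e 0, e 1} := by
        simp [tri]
      rw [this]
      exact hT
    · intro i hi
      by_cases hi0 : i = 0
      · subst hi0
        have e0 : tri (fun j => if j = 0 then z else e (j - 1)) 0 = {z, e 0, e 1} := by
          simp [tri]
        have e1 : tri (fun j => if j = 0 then z else e (j - 1)) 1 = tri e 0 := by
          simp [tri]
        rw [e0, e1]
        constructor
        · intro _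
          exact ht0
        · intro htriad
          exact absurd ht0 (fun _ => not_both h3c hW hT htriad)
      · have e1 : tri (fun j => if j = 0 then z else e (j - 1)) i = tri e (i - 1) := by
          simp only [tri, if_neg hi0, if_neg (by omega : i + 1 ≠ 0), if_neg (by omega : i + 2 ≠ 0)]
          rw [show i + 1 - 1 = (i - 1) + 1 by omega, show i + 2 - 1 = (i - 1) + 2 by omega]
        have e2 : tri (fun j => if j = 0 then z else e (j - 1)) (i + 1) = tri e i := by
          simp only [tri, if_neg (by omega : i + 1 ≠ 0), if_neg (by omega : i + 2 ≠ 0),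
            if_neg (by omega : i + 3 ≠ 0)]
          rw [show i + 1 - 1 = i by omega, show i + 2 - 1 = i + 1 by omega,
            show i + 3 - 1 = i + 2 by omega]
        rw [e1, e2]
        have := h.alt (i - 1) (by omega)
        rwa [show i - 1 + 1 = i by omega] at this
  · ext u
    simp only [Set.mem_image, Set.mem_Iio, Set.mem_insert_iff]
    constructor
    · rintro (rfl | ⟨i, hi, rfl⟩)
      · exact ⟨0, by omega, by simp⟩
      · exact ⟨i + 1, by omega, by simp⟩
    · rintro ⟨i, hi, rfl⟩
      by_cases hi0 : i = 0
      · simp [hi0]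
      · right
        exact ⟨i - 1, by omega, by simp [if_neg hi0]⟩

lemma mem_tri {e : ℕ → α} {i : ℕ} : x ∈ tri e i ↔ x = e i ∨ x = e (i + 1) ∨ x = e (i + 2) := by
  simp [tri]

lemma ncard_triple_le (a b c : α) : ({a, b, c} : Set α).ncard ≤ 3 := by
  have h1 := Set.ncard_insert_le a ({b, c} : Set α)
  have h2 := Set.ncard_insert_le b ({c} : Set α)
  have h3 : ({c} : Set α).ncard = 1 := Set.ncard_singleton c
  omega

/-- The endgame: a fan of even length at least 4 starting with a triangle, together with a
triangle wrapping around the end, contradicts 3-connectivity + not being a wheel. -/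
lemma endgame [M.Finite] (h3 : ThreeConnected M) (hW : ¬ IsWheelOrWhirl M)
    (h : FanOrd M n e) (hn : 4 ≤ n) (heven : n % 2 = 0) (ht0 : Triangle M (tri e 0))
    (hT : Triangle M {e (n - 2), e (n - 1), e 0}) : False := by
  have hE4 : 4 ≤ M.E.ncard := ground_four h hn
  have hpar := h.parity ht0
  set F := e '' Set.Iio n with hF
  have hFE : F ⊆ M.E := fan_subset_ground h
  have hFcard : F.ncard = n := fan_ncard h.inj
  set V := (fun k => e (2 * k)) '' Set.Iio (n / 2) with hV
  have hVinj : Set.InjOn (fun k => e (2 * k)) (Set.Iio (n / 2)) := by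
    intro i hi j hj hij
    simp only [Set.mem_Iio] at hi hj
    have := h.inj (show 2 * i ∈ Set.Iio n by simp only [Set.mem_Iio]; omega)
      (show 2 * j ∈ Set.Iio n by simp only [Set.mem_Iio]; omega) hij
    omega
  have hVF : V ⊆ F := by
    rintro u ⟨k, hk, rfl⟩
    simp only [Set.mem_Iio] at hk
    exact ⟨2 * k, by simp only [Set.mem_Iio]; omega, rfl⟩
  have hVE : V ⊆ M.E := hVF.trans hFE
  have hVcard : V.ncard = n / 2 := by
    rw [hV, Set.ncard_image_of_injOn hVinj, ncard_Iio]
  -- odd-indexed elements are not in V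
  have hoddV : ∀ i, i < n → i % 2 = 1 → e i ∉ V := by
    rintro i hi hodd ⟨k, hk, hek⟩
    simp only [Set.mem_Iio] at hk
    exact h.ne (by omega) hi (by omega) hek
  -- a circuit inside `insert g V` (or inside V) must be small
  have hCsmall : ∀ (W : Set α) (C : Set α), (∀ u ∈ W, u ∉ F) → Circuit M C → C ⊆ W ∪ V →
      C ⊆ W ∪ {e 0} := by
    intro W C hWF hC hCV
    have hmid : ∀ k, 1 ≤ k → k < n / 2 → e (2 * k) ∉ C := by
      intro k hk1 hk2 hkC
      have htriad : Triad M (tri e (2 * k - 1)) :=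
        (hpar (2 * k - 1) (by omega)).2 (by omega)
      refine orth' hC htriad.1 hkC (mem_tri.2 (Or.inr (Or.inl (by rw [show 2*k-1+1 = 2*k by omega])))) ?_
      intro y hyC hyT
      rcases mem_tri.1 hyT with rfl | rfl | rfl
      · exfalso
        rcases hCV hyC with hyW | hyV
        · exact hWF _ hyW ⟨2 * k - 1, by simp only [Set.mem_Iio]; omega, rfl⟩
        · exact hoddV _ (by omega) (by omega) hyV
      · rw [show 2*k-1+1 = 2*k by omega]
      · exfalso
        rcases hCV hyC with hyW | hyV
        · exact hWF _ hyW ⟨2 * k - 1 + 2, by simp only [Set.mem_Iio]; omega, rfl⟩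
        · exact hoddV _ (by omega) (by omega) hyV
    intro u huC
    rcases hCV huC with huW | huV
    · exact Or.inl huW
    · obtain ⟨k, hk, rfl⟩ := huV
      simp only [Set.mem_Iio] at hk
      rcases Nat.eq_zero_or_pos k with rfl | hk1
      · exact Or.inr (by simp)
      · exact absurd huC (hmid k hk1 hk)
  -- V is independent
  have hVindep : M.Indep V := by
    by_contra hdep
    obtain ⟨C, hC, hCV⟩ := exists_circuit_of_dep hVE hdep
    have := hCsmall ∅ C (by simp) hC (by simpa using hCV)
    simp only [Set.empty_union] at this
    have h1 := circuit_card h3 hE4 hC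
    have h2 : C.ncard ≤ 1 := by
      have := Set.ncard_le_ncard this (Set.finite_singleton _)
      simpa using this
    omega
  have hnrV : nr M V = n / 2 := by rw [nr_indep hVindep, hVcard]
  -- F ⊆ closure V
  have hFclV : F ⊆ M.closure V := by
    rintro u ⟨i, hi, rfl⟩
    simp only [Set.mem_Iio] at hi
    rcases Nat.even_or_odd i with he | ho
    · have hie : i % 2 = 0 := Nat.even_iff.1 he
      refine M.subset_closure V hVE ⟨i / 2, ?_, ?_⟩
      · simp only [Set.mem_Iio]; omega
      · simp only; congr 1; omega
    · have hio : i % 2 = 1 := Nat.odd_iff.1 ho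
      rcases Nat.lt_or_ge i (n - 1) with hi2 | hi2
      · -- i ≤ n - 2, odd hence i ≤ n - 3; use triangle t_{i-1}
        have htri : Triangle M (tri e (i - 1)) := (hpar (i - 1) (by omega)).1 (by omega)
        have hmem : e i ∈ M.closure (tri e (i - 1) \ {e i}) :=
          circuit_mem_closure_diff htri.1 (mem_tri.2 (Or.inr (Or.inl (by rw [show i-1+1 = i by omega]))))
        refine Set.mem_of_mem_of_subset hmem (M.closure_subset_closure ?_)
        rintro v ⟨hv, hvne⟩
        rcases mem_tri.1 hv with rfl | rfl | rfl
        · exact ⟨(i - 1) / 2, by simp only [Set.mem_Iio]; omega, by simp only; congr 1; omega⟩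
        · exact absurd (by rw [show i-1+1 = i by omega]; exact Set.mem_singleton _) hvne
        · exact ⟨(i + 1) / 2, by simp only [Set.mem_Iio]; omega, by simp only; congr 1; omega⟩
      · -- i = n - 1 : use T
        have hieq : i = n - 1 := by omega
        subst hieq
        have hmem : e (n - 1) ∈ M.closure ({e (n - 2), e (n - 1), e 0} \ {e (n - 1)}) :=
          circuit_mem_closure_diff hT.1 (by simp)
        refine Set.mem_of_mem_of_subset hmem (M.closure_subset_closure ?_)
        rintro v ⟨hv, hvne⟩
        simp only [Set.mem_insert_iff, Set.mem_singleton_iff] at hv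
        rcases hv with rfl | rfl | rfl
        · exact ⟨n / 2 - 1, by simp only [Set.mem_Iio]; omega, by simp only; congr 1; omega⟩
        · exact absurd rfl hvne
        · exact ⟨0, by simp only [Set.mem_Iio]; omega, by simp⟩
  have hnrF : nr M F ≤ n / 2 := by
    have := nr_le_of_subset_closure hFclV
    omega
  -- dual closure: F ⊆ closure_{M✶} (insert (e 1) V)
  set V' := insert (e 1) V with hV'
  have hV'E : V' ⊆ M✶.E := by
    rw [Set.insert_subset_iff]
    exact ⟨h.memE 1 (by omega), hVE⟩
  have hoddcl : ∀ m, 2 * m + 1 < n → e (2 * m + 1) ∈ M✶.closure V' := by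
    intro m
    induction m with
    | zero => exact fun _ => M✶.subset_closure V' hV'E (by simp [hV'])
    | succ p ih =>
      intro hlt
      have htriad : Triad M (tri e (2 * p + 1)) := (hpar (2 * p + 1) (by omega)).2 (by omega)
      have hmem : e (2 * p + 3) ∈ M✶.closure (tri e (2 * p + 1) \ {e (2 * p + 3)}) :=
        circuit_mem_closure_diff (M := M✶) htriad.1
          (mem_tri.2 (Or.inr (Or.inr (by rw [show 2*p+1+2 = 2*p+3 by omega]))))
      have hsub : tri e (2 * p + 1) \ {e (2 * p + 3)} ⊆ M✶.closure V' := by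
        rintro v ⟨hv, hvne⟩
        rcases mem_tri.1 hv with rfl | rfl | rfl
        · exact ih (by omega)
        · refine M✶.subset_closure V' hV'E (Set.mem_insert_of_mem _ ⟨p + 1, ?_, ?_⟩)
          · simp only [Set.mem_Iio]; omega
          · show e (2 * (p + 1)) = e (2 * p + 1 + 1)
            rw [show 2 * (p + 1) = 2 * p + 1 + 1 by omega]
        · exact absurd (by rw [show 2*p+1+2 = 2*p+3 by omega]; exact Set.mem_singleton _) hvne
      have hfinal := Matroid.closure_subset_closure_of_subset_closure hsub
      have := hfinal hmem
      rwa [show 2 * (p + 1) + 1 = 2 * p + 3 by omega]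
  have hFclV' : F ⊆ M✶.closure V' := by
    rintro u ⟨i, hi, rfl⟩
    simp only [Set.mem_Iio] at hi
    rcases Nat.even_or_odd i with he | ho
    · have hie : i % 2 = 0 := Nat.even_iff.1 he
      refine M✶.subset_closure V' hV'E (Set.mem_insert_of_mem _ ⟨i / 2, ?_, ?_⟩)
      · simp only [Set.mem_Iio]; omega
      · simp only; congr 1; omega
    · have hio : i % 2 = 1 := Nat.odd_iff.1 ho
      have := hoddcl (i / 2) (by omega)
      rwa [show 2 * (i / 2) + 1 = i by omega] at this
  have hnrF' : nr M✶ F ≤ n / 2 + 1 := by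
    have h1 := nr_le_of_subset_closure hFclV'
    have h2 : nr M✶ V' ≤ V'.ncard := nr_le_ncard' (M := M✶) (M.ground_finite.subset hV'E)
    have h3 : V'.ncard ≤ n / 2 + 1 := by
      rw [hV']
      have := Set.ncard_insert_le (e 1) V
      omega
    omega
  -- lambda F ≤ 1
  have hdualF := nr_dual_add (M := M) hFE
  have hlamF : lam M F = (nr M F : ℤ) + (nr M✶ F : ℤ) - (F.ncard : ℤ) := by
    rw [lam_eq]
    omega
  have hlam01 : lam M F = 0 ∨ lam M F = 1 := by
    have h0 := lam_nonneg' hFE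
    have h1 : lam M F ≤ 1 := by rw [hlamF]; omega
    omega
  have hnrVF : n / 2 ≤ nr M F := by
    have := le_nr hVindep hVF
    omega
  rcases hlam01 with hlam | hlam
  · -- E = F, wheel case
    have hEF : M.E = F := by
      have hne := h3 1 one_pos (by norm_num) F hFE
      have hcard0 : (M.E \ F).ncard = 0 := by
        by_contra hne0
        exact hne ⟨by rw [hlam]; norm_num, by omega, by omega⟩
      have hemp : M.E \ F = ∅ := by
        rw [← Set.ncard_eq_zero (M.ground_finite.diff (t := F))]
        omega
      have hsub : M.E ⊆ F := fun u hu => by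
        by_contra huF
        exact (Set.eq_empty_iff_forall_notMem.1 hemp) u ⟨hu, huF⟩
      exact hsub.antisymm hFE
    have hnrE : nr M M.E = n / 2 := by
      rw [hEF]
      omega
    -- the hyperplane-complement triad
    set V0 := (fun k => e (2 * k)) '' Set.Ico 1 (n / 2) with hV0
    have hV0E : V0 ⊆ M.E := by
      rintro u ⟨k, hk, rfl⟩
      simp only [Set.mem_Ico] at hk
      exact h.memE _ (by omega)
    have hV0card : V0.ncard ≤ n / 2 - 1 := by
      have hinj0 : Set.InjOn (fun k => e (2 * k)) (Set.Ico 1 (n / 2)) := by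
        intro i hi j hj hij
        simp only [Set.mem_Ico] at hi hj
        have := h.inj (show 2*i ∈ Set.Iio n by simp only [Set.mem_Iio]; omega)
          (show 2*j ∈ Set.Iio n by simp only [Set.mem_Iio]; omega) hij
        omega
      rw [hV0, Set.ncard_image_of_injOn hinj0, ← Finset.coe_Ico, Set.ncard_coe_finset,
        Nat.card_Ico]
    set H0 := e '' Set.Ico 2 (n - 1) with hH0
    have hH0E : H0 ⊆ M.E := by
      rintro u ⟨i, hi, rfl⟩
      simp only [Set.mem_Ico] at hi
      exact h.memE _ (by omega)
    have hH0cl : H0 ⊆ M.closure V0 := by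
      rintro u ⟨i, hi, rfl⟩
      simp only [Set.mem_Ico] at hi
      rcases Nat.even_or_odd i with he | ho
      · have hie : i % 2 = 0 := Nat.even_iff.1 he
        refine M.subset_closure V0 hV0E ⟨i / 2, ?_, ?_⟩
        · simp only [Set.mem_Ico]; omega
        · simp only; congr 1; omega
      · have hio : i % 2 = 1 := Nat.odd_iff.1 ho
        have htri : Triangle M (tri e (i - 1)) := (hpar (i - 1) (by omega)).1 (by omega)
        have hmem : e i ∈ M.closure (tri e (i - 1) \ {e i}) :=
          circuit_mem_closure_diff htri.1
            (mem_tri.2 (Or.inr (Or.inl (by rw [show i-1+1 = i by omega]))))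
        refine Set.mem_of_mem_of_subset hmem (M.closure_subset_closure ?_)
        rintro v ⟨hv, hvne⟩
        rcases mem_tri.1 hv with rfl | rfl | rfl
        · exact ⟨(i - 1) / 2, by simp only [Set.mem_Ico]; omega, by simp only; congr 1; omega⟩
        · exact absurd (by rw [show i-1+1 = i by omega]; exact Set.mem_singleton _) hvne
        · exact ⟨(i + 1) / 2, by simp only [Set.mem_Ico]; omega, by simp only; congr 1; omega⟩
    have hnrH0 : nr M H0 < nr M M.E := by
      have h1 := nr_le_of_subset_closure hH0cl
      have h2 : nr M V0 ≤ V0.ncard := nr_le_ncard' (M.ground_finite.subset hV0E)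
      omega
    -- there is a cocircuit inside E \ H0
    have hdep : ¬ M✶.Indep (M.E \ H0) := by
      intro hind
      obtain ⟨-, B, hB, hdisj⟩ := (Matroid.dual_indep_iff_exists').1 hind
      have hBH0 : B ⊆ H0 := by
        intro u huB
        by_contra huH
        exact hdisj.ne_of_mem ⟨hB.subset_ground huB, huH⟩ huB rfl
      have := le_nr hB.indep hBH0
      rw [base_ncard hB] at this
      omega
    obtain ⟨Cs, hCs, hCsub⟩ := exists_circuit_of_dep (M := M✶) Set.diff_subset hdep
    -- E \ H0 = {e (n-1), e 0, e 1}
    have hEH0 : M.E \ H0 = {e (n - 1), e 0, e 1} := by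
      rw [hEF]
      ext u
      simp only [Set.mem_diff, Set.mem_insert_iff, Set.mem_singleton_iff]
      constructor
      · rintro ⟨⟨i, hi, rfl⟩, hu⟩
        simp only [Set.mem_Iio] at hi
        by_cases h2i : 2 ≤ i ∧ i < n - 1
        · exact absurd ⟨i, by simp only [Set.mem_Ico]; omega, rfl⟩ hu
        · push_neg at h2i
          rcases Nat.lt_or_ge i 2 with hi2 | hi2
          · interval_cases i
            · right; left; rfl
            · right; right; rfl
          · left
            rw [show i = n - 1 by omega]
      · rintro (rfl | rfl | rfl)
        · refine ⟨⟨n - 1, by simp only [Set.mem_Iio]; omega, rfl⟩, ?_⟩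
          rintro ⟨j, hj, hej⟩
          simp only [Set.mem_Ico] at hj
          exact h.ne (by omega) (by omega) (by omega) hej.symm
        · refine ⟨⟨0, by simp only [Set.mem_Iio]; omega, rfl⟩, ?_⟩
          rintro ⟨j, hj, hej⟩
          simp only [Set.mem_Ico] at hj
          exact h.ne (by omega) (by omega) (by omega) hej.symm
        · refine ⟨⟨1, by simp only [Set.mem_Iio]; omega, rfl⟩, ?_⟩
          rintro ⟨j, hj, hej⟩
          simp only [Set.mem_Ico] at hj
          exact h.ne (by omega) (by omega) (by omega) hej.symm
    have hCsub' : Cs ⊆ M.E \ H0 := hCsub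
    rw [hEH0] at hCsub'
    have hCs3 : 3 ≤ Cs.ncard := circuit_card (threeConnected_dual h3) hE4 hCs
    have hCseq : Cs = {e (n - 1), e 0, e 1} :=
      Set.eq_of_subset_of_ncard_le hCsub' (le_trans (ncard_triple_le _ _ _) hCs3)
        (M.ground_finite.subset (by rw [← hEH0]; exact Set.diff_subset))
    have hD : Triad M {e (n - 1), e 0, e 1} := by
      refine ⟨hCseq ▸ hCs, ?_⟩
      rw [Set.ncard_eq_three]
      exact ⟨_, _, _, h.ne (by omega) (by omega) (by omega), h.ne (by omega) (by omega) (by omega),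
        h.ne (by omega) (by omega) (by omega), rfl⟩
    -- build the wheel
    refine hW ⟨n / 2, e, by omega, ?_, ?_, ?_⟩
    · rw [show 2 * (n / 2) = n by omega]
      exact h.inj
    · rw [show 2 * (n / 2) = n by omega, hEF, hF]
    · intro i hi
      rw [show 2 * (n / 2) = n by omega] at hi ⊢
      by_cases hi3 : i + 3 ≤ n
      · rw [Nat.mod_eq_of_lt (by omega : i + 1 < n), Nat.mod_eq_of_lt (by omega : i + 2 < n)]
        exact ⟨fun hp => (hpar i (by omega)).1 hp, fun hp => (hpar i (by omega)).2 hp⟩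
      · rcases (by omega : i = n - 2 ∨ i = n - 1) with rfl | rfl
        · rw [show n - 2 + 1 = n - 1 by omega, Nat.mod_eq_of_lt (by omega : n - 1 < n),
            show n - 2 + 2 = n by omega, Nat.mod_self]
          exact ⟨fun _ => hT, fun hp => by omega⟩
        · rw [show n - 1 + 1 = n by omega, Nat.mod_self,
            show n - 1 + 2 = n + 1 by omega, Nat.add_mod_left n 1,
            Nat.mod_eq_of_lt (by omega : 1 < n)]
          exact ⟨fun hp => by omega, fun _ => hD⟩
  · -- lam F = 1 : one extra element g, contradiction
    have hne := h3 2 two_pos (by norm_num) F hFE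
    have hcard1 : (M.E \ F).ncard ≤ 1 := by
      by_contra hgt
      push_neg at hgt
      exact hne ⟨by rw [hlam]; norm_num, by omega, by omega⟩
    rcases Nat.lt_or_ge (M.E \ F).ncard 1 with h0 | h1
    · -- E = F contradicts lam = 1
      have hemp : M.E \ F = ∅ := by
        rw [← Set.ncard_eq_zero (M.ground_finite.diff (t := F))]
        omega
      have hsub : M.E ⊆ F := by
        intro u hu
        by_contra huF
        exact (Set.eq_empty_iff_forall_notMem.1 hemp) u ⟨hu, huF⟩
      have hEF : M.E = F := hsub.antisymm hFE
      rw [lam_eq, hemp, nr_empty', hEF] at hlam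
      omega
    · obtain ⟨g, hgeq⟩ := Set.ncard_eq_one.1 (le_antisymm hcard1 h1)
      have hgEF : g ∈ M.E \ F := hgeq ▸ rfl
      have hnrg : nr M (M.E \ F) ≤ 1 := by
        rw [hgeq]
        have := nr_le_ncard' (M := M) (Set.finite_singleton g)
        simpa using this
      have hlam' := hlam
      rw [lam_eq] at hlam'
      have hnrEF : nr M M.E = nr M F := by
        have := nr_mono (M := M) hFE
        omega
      -- insert g V is dependent
      have hgV : g ∉ V := fun hgv => hgEF.2 (hVF hgv)
      have hdep : ¬ M.Indep (insert g V) := by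
        intro hind
        have := le_nr hind (Set.insert_subset hgEF.1 hVE)
        rw [Set.ncard_insert_of_notMem hgV (M.ground_finite.subset hVE)] at this
        omega
      obtain ⟨C, hC, hCV⟩ := exists_circuit_of_dep (Set.insert_subset hgEF.1 hVE) hdep
      have hCV' : C ⊆ {g} ∪ V := by rwa [Set.singleton_union]
      have hsmall := hCsmall {g} C (by rintro u rfl; exact hgEF.2) hC hCV'
      have hC3 := circuit_card h3 hE4 hC
      have hC2 : C.ncard ≤ 2 := by
        have hsub : C ⊆ {g, e 0} := by
          intro u hu
          rcases hsmall hu with hu1 | hu2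
          · exact Or.inl hu1
          · exact Or.inr hu2
        have h1 := Set.ncard_le_ncard hsub ((Set.finite_singleton (e 0)).insert g)
        have h2 := Set.ncard_insert_le g ({e 0} : Set α)
        have h3 : ({e 0} : Set α).ncard = 1 := Set.ncard_singleton _
        omega
      omega

lemma mem_tri' {e : ℕ → α} {i : ℕ} : x ∈ tri e i ↔ x = e i ∨ x = e (i + 1) ∨ x = e (i + 2) := by
  simp [tri]

lemma triple_rot (a b c : α) : ({a, b, c} : Set α) = {c, a, b} := by
  ext u; simp only [Set.mem_insert_iff, Set.mem_singleton_iff]; tauto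

lemma triple_swap (a b c : α) : ({a, b, c} : Set α) = {b, a, c} := by
  ext u; simp only [Set.mem_insert_iff, Set.mem_singleton_iff]; tauto

lemma triple_ncard (h1 : a ≠ b) (h2 : a ≠ c) (h3 : b ≠ c) : ({a, b, c} : Set α).ncard = 3 :=
  Set.ncard_eq_three.2 ⟨a, b, c, h1, h2, h3, rfl⟩

lemma triple_struct (hT : T.ncard = 3) (ha : a ∈ T) (hb : b ∈ T) (hab : a ≠ b) :
    ∃ z, z ≠ a ∧ z ≠ b ∧ T = {a, b, z} := by
  have hfin : T.Finite := Set.finite_of_ncard_ne_zero (by omega)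
  have hsub : ({a, b} : Set α) ⊆ T := by
    rw [Set.insert_subset_iff, Set.singleton_subset_iff]; exact ⟨ha, hb⟩
  have hdcard : (T \ {a, b}).ncard = 1 := by
    have h1 : (T \ {a, b}).ncard + ({a, b} : Set α).ncard = T.ncard :=
      Set.ncard_diff_add_ncard_of_subset hsub hfin
    rw [Set.ncard_pair hab] at h1
    omega
  obtain ⟨z, hz⟩ := Set.ncard_eq_one.1 hdcard
  have hzT : z ∈ T \ ({a, b} : Set α) := hz ▸ rfl
  refine ⟨z, fun h => hzT.2 (h ▸ Set.mem_insert a {b}),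
    fun h => hzT.2 (h ▸ Set.mem_insert_of_mem a rfl), ?_⟩
  ext u
  simp only [Set.mem_insert_iff, Set.mem_singleton_iff]
  constructor
  · intro hu
    by_cases hua : u = a
    · exact Or.inl hua
    by_cases hub : u = b
    · exact Or.inr (Or.inl hub)
    have : u ∈ T \ ({a, b} : Set α) := ⟨hu, fun hm => by
      rcases hm with rfl | rfl
      · exact hua rfl
      · exact hub rfl⟩
    rw [hz] at this
    exact Or.inr (Or.inr this)
  · rintro (rfl | rfl | rfl)
    exacts [ha, hb, hzT.1]

lemma circuit_eq_triple [M.Finite] (h3 : ThreeConnected M) (hE : 4 ≤ M.E.ncard)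
    (hC : Circuit M C) (hsub : C ⊆ {a, b, c}) (hab : a ≠ b) (hac : a ≠ c) (hbc : b ≠ c) :
    C = {a, b, c} :=
  Set.eq_of_subset_of_ncard_le hsub
    (le_trans (by rw [triple_ncard hab hac hbc] : ({a,b,c} : Set α).ncard ≤ 3)
      (circuit_card h3 hE hC))

/-- the main case analysis, for pairs `(e i, e (i+1))` with `i + 3 ≤ n` -/
lemma keyMain [M.Finite] (h3 : ThreeConnected M) (hW : ¬ IsWheelOrWhirl M)
    (h : FanOrd M n e) (hmax : MaximalFan M (e '' Set.Iio n)) (hn : 4 ≤ n)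
    {i : ℕ} (hi : i + 3 ≤ n) (hT : Triangle M T) (h1 : e i ∈ T) (h2 : e (i + 1) ∈ T) :
    (1 ≤ i ∧ T = {e (i - 1), e i, e (i + 1)}) ∨ (i + 2 < n ∧ T = {e i, e (i + 1), e (i + 2)}) := by
  have hE4 : 4 ≤ M.E.ncard := ground_four h hn
  obtain ⟨z, hza, hzb, hTeq⟩ := triple_struct hT.2 h1 h2 (h.ne (by omega) (by omega) (by omega))
  by_cases hz2 : z = e (i + 2)
  · exact Or.inr ⟨by omega, by rw [hTeq, hz2]⟩
  by_cases hz1 : 1 ≤ i ∧ z = e (i - 1)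
  · refine Or.inl ⟨hz1.1, ?_⟩
    rw [hTeq, hz1.2, triple_rot]
  exfalso
  -- basic distinctness facts about z
  have hzE : z ∈ M.E := hT.1.1 (hTeq ▸ Set.mem_insert_of_mem _ (Set.mem_insert_of_mem _ rfl))
  rcases Nat.eq_zero_or_pos i with rfl | hi1
  · -- i = 0
    simp only [Nat.zero_add] at *
    rcases h.first with ht0 | ht0
    · -- t_0 is a triangle; T another triangle through {e 0, e 1}
      have ht1 : Triad M (tri e 1) := (h.alt 0 (by omega)).1 ht0
      have hTne : T ≠ tri e 0 := by
        intro hEq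
        have : z ∈ tri e 0 := hEq ▸ (hTeq ▸ Set.mem_insert_of_mem _ (Set.mem_insert_of_mem _ rfl))
        rcases mem_tri'.1 this with h' | h' | h'
        exacts [hza h', hzb h', hz2 (by simpa using h')]
      -- eliminate e 1 : circuit A ⊆ {e 0, z, e 2}
      obtain ⟨A, hA, hAsub⟩ := circuit_elim hT.1 ht0.1 hTne
        (x := e 1) ⟨h2, mem_tri'.2 (Or.inr (Or.inl rfl))⟩
      have hAsub' : A ⊆ {e 0, z, e 2} := by
        intro u hu
        obtain ⟨hu1, hu2⟩ := hAsub hu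
        simp only [Set.mem_singleton_iff] at hu2
        rcases hu1 with huT | hut
        · rw [hTeq] at huT
          rcases huT with rfl | rfl | rfl
          · exact Or.inl rfl
          · exact absurd rfl hu2
          · exact Or.inr (Or.inl rfl)
        · rcases mem_tri'.1 hut with rfl | rfl | rfl
          · exact Or.inl rfl
          · exact absurd rfl hu2
          · exact Or.inr (Or.inr rfl)
      have hAeq : A = {e 0, z, e 2} := circuit_eq_triple h3 hE4 hA hAsub'
        (fun hh => hza hh.symm) (h.ne (by omega) (by omega) (by omega)) (fun hh => hz2 hh)
      by_cases hz3 : z = e 3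
      · -- second elimination gives that tri e 1 is also a triangle
        obtain ⟨B, hB, hBsub⟩ := circuit_elim hT.1 ht0.1 hTne
          (x := e 0) ⟨h1, mem_tri'.2 (Or.inl rfl)⟩
        have hBsub' : B ⊆ tri e 1 := by
          intro u hu
          obtain ⟨hu1, hu2⟩ := hBsub hu
          simp only [Set.mem_singleton_iff] at hu2
          rcases hu1 with huT | hut
          · rw [hTeq] at huT
            rcases huT with rfl | rfl | rfl
            · exact absurd rfl hu2
            · exact mem_tri'.2 (Or.inl rfl)
            · rw [hz3]
              exact mem_tri'.2 (Or.inr (Or.inr rfl))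
          · rcases mem_tri'.1 hut with rfl | rfl | rfl
            · exact absurd rfl hu2
            · exact mem_tri'.2 (Or.inl rfl)
            · exact mem_tri'.2 (Or.inr (Or.inl rfl))
        have hBeq : B = tri e 1 := by
          have : tri e 1 = {e 1, e 2, e 3} := rfl
          rw [this] at hBsub' ⊢
          exact circuit_eq_triple h3 hE4 hB hBsub' (h.ne (by omega) (by omega) (by omega))
            (h.ne (by omega) (by omega) (by omega)) (h.ne (by omega) (by omega) (by omega))
        refine not_both h3 hW ⟨hBeq ▸ hB, ?_⟩ ht1
        show (tri e 1).ncard = 3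
        exact triple_ncard (h.ne (by omega) (by omega) (by omega))
          (h.ne (by omega) (by omega) (by omega)) (h.ne (by omega) (by omega) (by omega))
      · -- orthogonality of A with the triad tri e 1
        refine orth' hA ht1.1 (hAeq ▸ Set.mem_insert_of_mem _ (Set.mem_insert_of_mem _ rfl))
          (mem_tri'.2 (Or.inr (Or.inl rfl))) ?_
        intro y hyA hyt
        rw [hAeq] at hyA
        rcases hyA with rfl | rfl | rfl
        · exfalso
          rcases mem_tri'.1 hyt with h' | h' | h'
          exacts [h.ne (by omega) (by omega) (by omega) h',
            h.ne (by omega) (by omega) (by omega) h',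
            h.ne (by omega) (by omega) (by omega) h']
        · exfalso
          rcases mem_tri'.1 hyt with h' | h' | h'
          exacts [hzb h', hz2 h', hz3 h']
        · rfl
    · -- t_0 is a triad
      by_cases hzF : z ∈ e '' Set.Iio n
      · -- z is a fan element : z = e (n-1) and n is even; endgame via reversal
        obtain ⟨m, hm, hzm⟩ := hzF
        simp only [Set.mem_Iio] at hm
        have hpar := h.parity' ht0
        -- z is in no triad t_j, j even, 2 ≤ j ≤ n-3
        have hnot : ∀ j, 2 ≤ j → j + 2 < n → j % 2 = 0 → z ∉ tri e j := by
          intro j hj2 hjn hjev hzt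
          have htj : Triad M (tri e j) := (hpar j hjn).1 hjev
          refine orth' hT.1 htj.1 (hTeq ▸ Set.mem_insert_of_mem _ (Set.mem_insert_of_mem _ rfl))
            hzt ?_
          intro y hyT hyt
          rw [hTeq] at hyT
          rcases hyT with rfl | rfl | rfl
          · exfalso
            rcases mem_tri'.1 hyt with h' | h' | h'
            exacts [h.ne (by omega) (by omega) (by omega) h',
              h.ne (by omega) (by omega) (by omega) h',
              h.ne (by omega) (by omega) (by omega) h']
          · exfalso
            rcases mem_tri'.1 hyt with h' | h' | h'
            exacts [h.ne (by omega) (by omega) (by omega) h',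
              h.ne (by omega) (by omega) (by omega) h',
              h.ne (by omega) (by omega) (by omega) h']
          · rfl
        -- m is at least 3
        have hm0 : m ≠ 0 := fun hh => hza (by rw [← hzm, hh])
        have hm1 : m ≠ 1 := fun hh => hzb (by rw [← hzm, hh])
        have hm2 : m ≠ 2 := fun hh => hz2 (by rw [← hzm, hh])
        -- m = n-1 and n even
        have hmn : m = n - 1 ∧ n % 2 = 0 := by
          by_contra hcon
          -- find an even j ∈ [2, n-3] with m ∈ {j, j+1, j+2}
          have hcase : ∃ j, 2 ≤ j ∧ j + 2 < n ∧ j % 2 = 0 ∧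
              (m = j ∨ m = j + 1 ∨ m = j + 2) := by
            rcases Nat.even_or_odd m with hme | hmo
            · have hme' : m % 2 = 0 := Nat.even_iff.1 hme
              rcases Nat.lt_or_ge m (n - 1) with hlt | hge
              · exact ⟨m - 2, by omega, by omega, by omega, by omega⟩
              · -- m = n - 1, so n must be odd here
                have hnodd : n % 2 = 1 := by omega
                exact ⟨m - 2, by omega, by omega, by omega, by omega⟩
            · have hmo' : m % 2 = 1 := Nat.odd_iff.1 hmo
              have hmlt : m < n - 1 := by omega
              exact ⟨m - 1, by omega, by omega, by omega, by omega⟩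
          obtain ⟨j, hj2, hjn, hjev, hjm⟩ := hcase
          refine hnot j hj2 hjn hjev (mem_tri'.2 ?_)
          rcases hjm with hm' | hm' | hm'
          · exact Or.inl (by rw [← hzm, hm'])
          · exact Or.inr (Or.inl (by rw [← hzm, hm']))
          · exact Or.inr (Or.inr (by rw [← hzm, hm']))
        obtain ⟨hmeq, hnev⟩ := hmn
        -- endgame on the reversed fan
        have hrev := h.rev h3 hW
        have ht0' : Triangle M (tri (fun j => e (n - 1 - j)) 0) := by
          rw [tri_rev (by omega), show n - 3 - 0 = n - 3 by omega]
          exact (hpar (n - 3) (by omega)).2 (by omega)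
        have hTset : ({(fun j => e (n - 1 - j)) (n - 2), (fun j => e (n - 1 - j)) (n - 1),
            (fun j => e (n - 1 - j)) 0} : Set α) = T := by
          simp only
          rw [show n - 1 - (n - 2) = 1 by omega, show n - 1 - (n - 1) = 0 by omega,
            show n - 1 - 0 = n - 1 by omega, hTeq, ← hzm, hmeq, triple_swap]
        exact endgame h3 hW hrev hn hnev ht0' (hTset ▸ hT)
      · -- z outside the fan : extend the fan, contradicting maximality
        have hfan := fan_extend_left h3 hW h hzE hzF (by rw [← triple_rot, ← hTeq]; exact hT) ht0
        have heq := hmax.2 _ hfan (Set.subset_insert _ _)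
        exact hzF (heq ▸ Set.mem_insert z _)
  · -- 1 ≤ i
    have hzi1 : z ≠ e (i - 1) := fun hh => hz1 ⟨hi1, hh⟩
    rcases h.typed (i - 1) (by omega) with htA | htA
    · -- t_{i-1} triangle, t_i triad
      have hti : Triad M (tri e i) := by
        have := (h.alt (i - 1) (by omega)).1 htA
        rwa [show i - 1 + 1 = i by omega] at this
      have hTne : T ≠ tri e (i - 1) := by
        intro hEq
        have : z ∈ tri e (i - 1) :=
          hEq ▸ (hTeq ▸ Set.mem_insert_of_mem _ (Set.mem_insert_of_mem _ rfl))
        rcases mem_tri'.1 this with h' | h' | h'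
        · exact hzi1 h'
        · exact hza (by rwa [show i - 1 + 1 = i by omega] at h')
        · exact hzb (by rwa [show i - 1 + 2 = i + 1 by omega] at h')
      obtain ⟨B, hB, hBsub⟩ := circuit_elim hT.1 htA.1 hTne
        (x := e i) ⟨h1, mem_tri'.2 (Or.inr (Or.inl (by rw [show i - 1 + 1 = i by omega])))⟩
      have hBsub' : B ⊆ {e (i - 1), e (i + 1), z} := by
        intro u hu
        obtain ⟨hu1, hu2⟩ := hBsub hu
        simp only [Set.mem_singleton_iff] at hu2
        rcases hu1 with huT | hut
        · rw [hTeq] at huT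
          rcases huT with rfl | rfl | rfl
          · exact absurd rfl hu2
          · exact Or.inr (Or.inl rfl)
          · exact Or.inr (Or.inr rfl)
        · rcases mem_tri'.1 hut with rfl | rfl | rfl
          · exact Or.inl rfl
          · exact absurd (by rw [show i - 1 + 1 = i by omega]) hu2
          · exact Or.inr (Or.inl (by rw [show i - 1 + 2 = i + 1 by omega]))
      have hBeq : B = {e (i - 1), e (i + 1), z} := circuit_eq_triple h3 hE4 hB hBsub'
        (h.ne (by omega) (by omega) (by omega)) (fun hh => hzi1 hh.symm) (fun hh => hzb hh.symm)
      refine orth' hB hti.1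
        (hBeq ▸ Set.mem_insert_of_mem _ (Set.mem_insert _ _))
        (mem_tri'.2 (Or.inr (Or.inl rfl))) ?_
      intro y hyB hyt
      rw [hBeq] at hyB
      rcases hyB with rfl | rfl | rfl
      · exfalso
        rcases mem_tri'.1 hyt with h' | h' | h'
        exacts [h.ne (by omega) (by omega) (by omega) h',
          h.ne (by omega) (by omega) (by omega) h',
          h.ne (by omega) (by omega) (by omega) h']
      · rfl
      · exfalso
        rcases mem_tri'.1 hyt with h' | h' | h'
        exacts [hza h', hzb h', hz2 h']
    · -- t_{i-1} triad, t_i triangle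
      have hti : Triangle M (tri e i) := by
        have := (h.alt (i - 1) (by omega)).2 htA
        rwa [show i - 1 + 1 = i by omega] at this
      have hTne : T ≠ tri e i := by
        intro hEq
        have : z ∈ tri e i :=
          hEq ▸ (hTeq ▸ Set.mem_insert_of_mem _ (Set.mem_insert_of_mem _ rfl))
        rcases mem_tri'.1 this with h' | h' | h'
        exacts [hza h', hzb h', hz2 h']
      obtain ⟨B, hB, hBsub⟩ := circuit_elim hT.1 hti.1 hTne
        (x := e i) ⟨h1, mem_tri'.2 (Or.inl rfl)⟩
      have hBsub' : B ⊆ {e (i + 1), e (i + 2), z} := by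
        intro u hu
        obtain ⟨hu1, hu2⟩ := hBsub hu
        simp only [Set.mem_singleton_iff] at hu2
        rcases hu1 with huT | hut
        · rw [hTeq] at huT
          rcases huT with rfl | rfl | rfl
          · exact absurd rfl hu2
          · exact Or.inl rfl
          · exact Or.inr (Or.inr rfl)
        · rcases mem_tri'.1 hut with rfl | rfl | rfl
          · exact absurd rfl hu2
          · exact Or.inl rfl
          · exact Or.inr (Or.inl rfl)
      have hBeq : B = {e (i + 1), e (i + 2), z} := circuit_eq_triple h3 hE4 hB hBsub'
        (h.ne (by omega) (by omega) (by omega)) (fun hh => hzb hh.symm) (fun hh => hz2 hh.symm)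
      refine orth' hB htA.1
        (hBeq ▸ Set.mem_insert _ _)
        (mem_tri'.2 (Or.inr (Or.inr (by rw [show i - 1 + 2 = i + 1 by omega])))) ?_
      intro y hyB hyt
      rw [hBeq] at hyB
      rcases hyB with rfl | rfl | rfl
      · rfl
      · exfalso
        rcases mem_tri'.1 hyt with h' | h' | h'
        exacts [h.ne (by omega) (by omega) (by omega) h',
          h.ne (by omega) (by omega) (by omega) h',
          h.ne (by omega) (by omega) (by omega) h']
      · exfalso
        rcases mem_tri'.1 hyt with h' | h' | h'
        · exact hzi1 h'
        · exact hza (by rwa [show i - 1 + 1 = i by omega] at h')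
        · exact hzb (by rwa [show i - 1 + 2 = i + 1 by omega] at h')

lemma keyTriangle [M.Finite] (h3 : ThreeConnected M) (hW : ¬ IsWheelOrWhirl M)
    (h : FanOrd M n e) (hmax : MaximalFan M (e '' Set.Iio n)) (hn : 4 ≤ n)
    {i : ℕ} (hi : i + 1 < n) (hT : Triangle M T) (h1 : e i ∈ T) (h2 : e (i + 1) ∈ T) :
    (1 ≤ i ∧ T = {e (i - 1), e i, e (i + 1)}) ∨ (i + 2 < n ∧ T = {e i, e (i + 1), e (i + 2)}) := by
  by_cases hi3 : i + 3 ≤ n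
  · exact keyMain h3 hW h hmax hn hi3 hT h1 h2
  · have hieq : i = n - 2 := by omega
    subst hieq
    have hrev := h.rev h3 hW
    have hmax' : MaximalFan M ((fun j => e (n - 1 - j)) '' Set.Iio n) := by
      rw [rev_image]; exact hmax
    have h1' : (fun j => e (n - 1 - j)) 0 ∈ T := by
      show e (n - 1 - 0) ∈ T
      rw [show n - 1 - 0 = n - 2 + 1 by omega]
      exact h2
    have h2' : (fun j => e (n - 1 - j)) (0 + 1) ∈ T := by
      show e (n - 1 - (0 + 1)) ∈ T
      rw [show n - 1 - (0 + 1) = n - 2 by omega]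
      exact h1
    rcases keyMain h3 hW hrev hmax' hn (i := 0) (by omega) hT h1' h2' with ⟨h0, -⟩ | ⟨-, hTeq⟩
    · omega
    · refine Or.inl ⟨by omega, ?_⟩
      rw [hTeq]
      show ({e (n - 1 - 0), e (n - 1 - (0 + 1)), e (n - 1 - (0 + 2))} : Set α) = _
      rw [show n - 1 - 0 = n - 1 by omega, show n - 1 - (0 + 1) = n - 2 by omega,
        show n - 1 - (0 + 2) = n - 3 by omega, triple_rev,
        show n - 3 = n - 2 - 1 by omega, show n - 1 = n - 2 + 1 by omega]

-- duality transfer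
lemma triangle_dual : Triangle M✶ T ↔ Triad M T := Iff.rfl

lemma triad_dual : Triad M✶ T ↔ Triangle M T := by
  unfold Triad Cocircuit Triangle
  rw [Matroid.dual_dual]

lemma fanOrd_dual (h : FanOrd M n e) : FanOrd M✶ n e := by
  refine ⟨h.n3, h.inj, fun i hi => h.2.2.1 i hi, ?_, ?_⟩
  · rcases h.first with ht | ht
    · exact Or.inr (triad_dual.2 ht)
    · exact Or.inl (triangle_dual.2 ht)
  · intro i hi
    constructor
    · intro htri
      exact triad_dual.2 ((h.alt i hi).2 (triangle_dual.1 htri))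
    · intro htria
      exact triangle_dual.2 ((h.alt i hi).1 (triad_dual.1 htria))

lemma isFan_dual (h : IsFan M F) : IsFan M✶ F := by
  rcases h with ⟨hFE, hc⟩ | ⟨n, e, hord, hF⟩
  · exact Or.inl ⟨hFE, hc⟩
  · exact Or.inr ⟨n, e, fanOrd_dual hord, hF⟩

lemma isFan_dual' (h : IsFan M✶ F) : IsFan M F := by
  have := isFan_dual (M := M✶) h
  rwa [Matroid.dual_dual] at this

lemma maximalFan_dual (h : MaximalFan M F) : MaximalFan M✶ F :=
  ⟨isFan_dual h.1, fun F' hF' hsub => h.2 F' (isFan_dual' hF') hsub⟩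

lemma mod_succ_inj {i j m : ℕ} (hm : 0 < m) (hi : i < m) (hj : j < m)
    (h : (i + 1) % m = (j + 1) % m) : i = j := by
  have hi' : (i + 1) % m = if i + 1 = m then 0 else i + 1 := by
    split
    · rw [‹i + 1 = m›, Nat.mod_self]
    · exact Nat.mod_eq_of_lt (by omega)
  have hj' : (j + 1) % m = if j + 1 = m then 0 else j + 1 := by
    split
    · rw [‹j + 1 = m›, Nat.mod_self]
    · exact Nat.mod_eq_of_lt (by omega)
  rw [hi', hj'] at h
  split at h <;> split at h <;> omega

lemma wheel_dual [M.Finite] (h : IsWheelOrWhirl M✶) : IsWheelOrWhirl M := by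
  obtain ⟨n', e', hn', hinj, hE, htrip⟩ := h
  have hm : 0 < 2 * n' := by omega
  have h2m : (2 : ℕ) ∣ 2 * n' := ⟨n', rfl⟩
  refine ⟨n', fun i => e' ((i + 1) % (2 * n')), hn', ?_, ?_, ?_⟩
  · intro i hi j hj hij
    simp only [Set.mem_Iio] at hi hj
    have := hinj (show (i + 1) % (2 * n') ∈ Set.Iio (2 * n') by
        simp only [Set.mem_Iio]; exact Nat.mod_lt _ hm)
      (show (j + 1) % (2 * n') ∈ Set.Iio (2 * n') by
        simp only [Set.mem_Iio]; exact Nat.mod_lt _ hm) hij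
    exact mod_succ_inj hm hi hj this
  · have hE' : M.E = e' '' Set.Iio (2 * n') := hE
    rw [hE']
    ext u
    simp only [Set.mem_image, Set.mem_Iio]
    constructor
    · rintro ⟨i, hi, rfl⟩
      by_cases hi0 : i = 0
      · refine ⟨2 * n' - 1, by omega, ?_⟩
        rw [show 2 * n' - 1 + 1 = 2 * n' by omega, Nat.mod_self, hi0]
      · refine ⟨i - 1, by omega, ?_⟩
        rw [show i - 1 + 1 = i by omega, Nat.mod_eq_of_lt hi]
    · rintro ⟨i, hi, rfl⟩
      exact ⟨(i + 1) % (2 * n'), Nat.mod_lt _ hm, rfl⟩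
  · intro i hi
    have hj : (i + 1) % (2 * n') < 2 * n' := Nat.mod_lt _ hm
    have hpar : (i + 1) % (2 * n') % 2 = (i + 1) % 2 := Nat.mod_mod_of_dvd _ h2m
    have hc3 : ((i + 2) % (2 * n') + 1) % (2 * n') = ((i + 1) % (2 * n') + 2) % (2 * n') := by
      rw [Nat.mod_add_mod, Nat.mod_add_mod]
      try congr 1
      all_goals omega
    have htripj := htrip ((i + 1) % (2 * n')) hj
    constructor
    · intro hev
      have hp1 : (i + 1) % (2 * n') % 2 = 1 := by omega
      have hT := htripj.2 hp1
      show Triangle M {e' ((i + 1) % (2 * n')),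
        e' (((i + 1) % (2 * n') + 1) % (2 * n')), e' (((i + 2) % (2 * n') + 1) % (2 * n'))}
      rw [hc3]
      exact triad_dual.1 hT
    · intro hodd
      have hp0 : (i + 1) % (2 * n') % 2 = 0 := by omega
      have hT := htripj.1 hp0
      show Triad M {e' ((i + 1) % (2 * n')),
        e' (((i + 1) % (2 * n') + 1) % (2 * n')), e' (((i + 2) % (2 * n') + 1) % (2 * n'))}
      rw [hc3]
      exact triangle_dual.1 hT



/-- In a maximal fan of length at least 4 in a 3-connected matroid that is not a
wheel or a whirl, any triangle (resp. triad) containing two consecutive fan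
elements consists of three consecutive fan elements. -/
theorem stmt7 (M : Matroid α) [M.Finite] (hM : ThreeConnected M)
    (hW : ¬ IsWheelOrWhirl M) {n : ℕ} {e : ℕ → α} {F : Set α}
    (hord : FanOrd M n e) (hF : F = e '' Set.Iio n) (hmax : MaximalFan M F)
    (hn : 4 ≤ n) :
    ∀ i, i + 1 < n →
      (∀ T, Triangle M T → e i ∈ T → e (i + 1) ∈ T →
        (1 ≤ i ∧ T = {e (i - 1), e i, e (i + 1)}) ∨
        (i + 2 < n ∧ T = {e i, e (i + 1), e (i + 2)})) ∧
      (∀ T, Triad M T → e i ∈ T → e (i + 1) ∈ T →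
        (1 ≤ i ∧ T = {e (i - 1), e i, e (i + 1)}) ∨
        (i + 2 < n ∧ T = {e i, e (i + 1), e (i + 2)})) := by
  subst hF
  intro i hi
  constructor
  · intro T hTri h1 h2
    exact keyTriangle hM hW hord hmax hn hi hTri h1 h2
  · intro T hTd h1 h2
    exact keyTriangle (M := M✶) (threeConnected_dual hM) (fun hw => hW (wheel_dual hw))
      (fanOrd_dual hord) (maximalFan_dual hmax) hn hi (triangle_dual.2 hTd) h1 h2
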